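/- Fix n ∈ ℕ and r ∈ [0,1). Let ξ° be a diffuse random measure on ℝ^d, and let Y° = (Y°_s)_{s∈ℝ^d} be the background defined by: Y°_0 is uniform on [0,n)^d and independent of (X°,ξ°), and Y°_s is the vector from the lexicographically lowest corner of the box of the lattice nℤ^d − Y°_0 containing s, to s. Define π_r(Y°,ξ°) := ψ_r^μ(Y°_0) − Y°_0, where μ = θ_{−Y°_0}ξ°(· | [0,n)^d). Then π_r is a preserving shift: for each fixed value of (Y°,ξ°), the induced allocation rule τ_r(s) := s + π_r(θ_s(Y°,ξ°)) satisfies ξ°({s : τ_r(s) ∈ B}) = ξ°(B) for all Borel B ⊆ ℝ^d. -/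

import Mathlib

open MeasureTheory ENNReal Set

namespace LT

/-- Points of `ℝ^d`. -/
abbrev Rd (d : ℕ) := Fin d → ℝ

/-- Points of `ℤ^d`. -/
abbrev ZZd (d : ℕ) := Fin d → ℤ

/-- The shift `θ_t ξ`, satisfying `θ_t ξ (B) = ξ (B + t)`. -/
noncomputable def shiftM {d : ℕ} (t : Rd d) (ξ : Measure (Rd d)) : Measure (Rd d) :=
  Measure.map (fun x => x - t) ξ

/-- A (jointly) measurable action of the additive group `ℝ^d` on a measurable space `E`,
written `θ_t x = act t x`. -/
structure Action (d : ℕ) (E : Type*) [MeasurableSpace E] where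
  act : Rd d → E → E
  measurable_act : ∀ t, Measurable (act t)
  act_zero : ∀ x, act 0 x = x
  act_add : ∀ s t x, act s (act t x) = act (s + t) x

/-- The conditional (normalized) measure `ξ(· | A)`. -/
noncomputable def condM {d : ℕ} (ξ : Measure (Rd d)) (A : Set (Rd d)) : Measure (Rd d) :=
  (ξ A)⁻¹ • ξ.restrict A

/-- `0` lies in the support of `ξ`. -/
def zeroInSupport {d : ℕ} (ξ : Measure (Rd d)) : Prop :=
  ∀ U : Set (Rd d), IsOpen U → (0 : Rd d) ∈ U → 0 < ξ U

variable {d : ℕ} {Ω E : Type*} [MeasurableSpace Ω] [MeasurableSpace E]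

/-- The defining identity (1) of mass-stationarity for a fixed set `C` :
`(θ_{V_C}(X,ξ), V_C + U_C) =_D ((X,ξ), U_C)`, where the conditional distribution of `U_C`
given `(X,ξ)` is uniform on `C` and that of `V_C` given `((X,ξ),U_C)` is `ξ(· | C - U_C)`. -/
def MSIdentity (Θ : Action d E) (P : Measure Ω) (X : Ω → E) (ξ : Ω → Measure (Rd d))
    (C : Set (Rd d)) : Prop :=
  ∀ f : (E × Measure (Rd d)) × Rd d → ℝ≥0∞, Measurable f →
    ∫⁻ ω, (volume C)⁻¹ * ∫⁻ u in C,
        ∫⁻ v, f ((Θ.act v (X ω), shiftM v (ξ ω)), v + u)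
          ∂(condM (ξ ω) ((· + u) ⁻¹' C)) ∂volume ∂P
    = ∫⁻ ω, (volume C)⁻¹ * ∫⁻ u in C, f ((X ω, ξ ω), u) ∂volume ∂P

/-- Mass-stationarity of `(X, ξ)` under `P`. -/
def IsMassStationary (Θ : Action d E) (P : Measure Ω) (X : Ω → E)
    (ξ : Ω → Measure (Rd d)) : Prop :=
  ∀ C : Set (Rd d), MeasurableSet C → Bornology.IsBounded C → 0 < volume C →
    volume (frontier C) = 0 → MSIdentity Θ P X ξ C

/-- Stationarity of the pair `(X, ξ)` under `P`. -/
def IsStationary (Θ : Action d E) (P : Measure Ω) (X : Ω → E)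
    (ξ : Ω → Measure (Rd d)) : Prop :=
  ∀ t : Rd d, Measure.map (fun ω => (Θ.act t (X ω), shiftM t (ξ ω))) P
    = Measure.map (fun ω => (X ω, ξ ω)) P

/-- Stationarity of a random element `X` under `P`. -/
def IsStationaryElem (Θ : Action d E) (P : Measure Ω) (X : Ω → E) : Prop :=
  ∀ t : Rd d, Measure.map (fun ω => Θ.act t (X ω)) P = Measure.map X P

/-- `(Xc, ξc)` under `Pc` is the Palm version of the (stationary) pair `(X, ξ)` under `P`. -/
def IsPalmVersion {Ω' : Type*} [MeasurableSpace Ω']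
    (Θ : Action d E) (Pc : Measure Ω) (Xc : Ω → E) (ξc : Ω → Measure (Rd d))
    (P : Measure Ω') (X : Ω' → E) (ξ : Ω' → Measure (Rd d)) : Prop :=
  ∀ f : E × Measure (Rd d) → ℝ≥0∞, Measurable f →
    ∀ B : Set (Rd d), MeasurableSet B → 0 < volume B → volume B < ⊤ →
      ∫⁻ ω, f (Xc ω, ξc ω) ∂Pc
        = (volume B)⁻¹ * ∫⁻ ω, ∫⁻ t in B, f (Θ.act t (X ω), shiftM t (ξ ω)) ∂(ξ ω) ∂P

end LT
namespace LT

/-- Lexicographic order on `ℤ^d` (with the index order of `Fin d`). -/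
def lexLE {d : ℕ} (a b : ZZd d) : Prop :=
  a = b ∨ ∃ k : Fin d, a k < b k ∧ ∀ l, l < k → a l = b l

/-- The half-open unit cube `i + [0,1)^d` based at `i ∈ ℤ^d`. -/
def cube {d : ℕ} (i : ZZd d) : Set (Rd d) :=
  {x | ∀ k, (i k : ℝ) ≤ x k ∧ x k < (i k : ℝ) + 1}

/-- The half-open box `[0,n)^d`. -/
def boxN (d n : ℕ) : Set (Rd d) := {x | ∀ k, 0 ≤ x k ∧ x k < (n : ℝ)}

/-- The half-open unit box `[0,1)^d`. -/
def box01 (d : ℕ) : Set (Rd d) := boxN d 1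

/-- The simple point process on `ℤ^d` having a point at `i` iff `ξ(i + [0,1)^d) > 0`. -/
def Npts {d : ℕ} (ξ : Measure (Rd d)) : Set (ZZd d) := {i | 0 < ξ (cube i)}

/-- Squared Euclidean distance on `ℤ^d`. -/
def sqdist {d : ℕ} (i j : ZZd d) : ℤ := ∑ k, (i k - j k) ^ 2

open Classical in
/-- The point of `N ⊆ ℤ^d` closest to `i`, the lexicographically lowest one in case of
ties (junk value `i` if no such point exists, e.g. if `N = ∅`). -/
noncomputable def voronoiCenter {d : ℕ} (N : Set (ZZd d)) (i : ZZd d) : ZZd d :=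
  if h : ∃ j, j ∈ N ∧ (∀ j' ∈ N, sqdist i j ≤ sqdist i j') ∧
      (∀ j' ∈ N, sqdist i j' = sqdist i j → lexLE j j') then h.choose else i

/-- The Voronoi cell (w.r.t. `N`) containing the origin of `ℤ^d`: the set `D`. -/
def Dcell {d : ℕ} (N : Set (ZZd d)) : Set (ZZd d) :=
  {i | voronoiCenter N i = voronoiCenter N 0}

/-- The vector `S = S_0` from the `N`-point of the cell of `0` to `0`. -/
noncomputable def Svec {d : ℕ} (N : Set (ZZd d)) : ZZd d := -(voronoiCenter N 0)

/-- The set `D° = S + D`. -/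
noncomputable def Dc {d : ℕ} (N : Set (ZZd d)) : Set (ZZd d) :=
  (fun i => Svec N + i) '' Dcell N

/-- Embedding `ℤ^d → ℝ^d`. -/
def toRd {d : ℕ} (i : ZZd d) : Rd d := fun k => (i k : ℝ)

/-- The support of a measure on `ℝ^d`. -/
def msupport {d : ℕ} (ξ : Measure (Rd d)) : Set (Rd d) :=
  {x | ∀ U : Set (Rd d), IsOpen U → x ∈ U → 0 < ξ U}

end LT
namespace LT

/-- The distribution function `F_μ(x) = μ(φ ≤ x)` of the pushforward `P_μ` of `μ`
under `φ`. -/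
noncomputable def cdf {d : ℕ} (μ : Measure (Rd d)) (φ : Rd d → ℝ) (x : ℝ) : ℝ :=
  (μ (φ ⁻¹' Set.Iic x)).toReal

/-- The (right-continuous) generalized inverse `F_μ⁻¹(v) = inf {x : F_μ(x) ≥ v}`. -/
noncomputable def cdfInv {d : ℕ} (μ : Measure (Rd d)) (φ : Rd d → ℝ) (v : ℝ) : ℝ :=
  sInf {x : ℝ | v ≤ cdf μ φ x}

/-- The map `ψ_r^μ = φ⁻¹(F_μ⁻¹(F_μ(φ(·)) + r mod 1))` of `[0,n)^d` to itself. -/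
noncomputable def psiMap {d : ℕ} (μ : Measure (Rd d)) (φ : Rd d → ℝ) (ψ : ℝ → Rd d)
    (r : ℝ) (s : Rd d) : Rd d :=
  ψ (cdfInv μ φ (Int.fract (cdf μ φ (φ s) + r)))

end LT
namespace LT

/-- The lexicographically lowest corner of the box of the lattice `nℤ^d - y₀`
containing `s`. -/
noncomputable def corner (d n : ℕ) (y0 s : Rd d) : Rd d :=
  fun k => (n : ℝ) * (⌊(s k + y0 k) / (n : ℝ)⌋ : ℤ) - y0 k

/-- The allocation rule `τ_r` induced by the preserving shift `π_r` of Example 1: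
`τ_r` maps each point `s` of a box of `nℤ^d - y₀` to the point of the same box obtained
by applying `ψ_r^μ` (with `μ = θ_{s-Y°_s} ξ°(· | [0,n)^d)` the normalized restriction of
`ξ°` to that box) to the relative coordinate of `s`. -/
noncomputable def tauEx (d n : ℕ) (φ : Rd d → ℝ) (ψ : ℝ → Rd d) (r : ℝ)
    (ξm : Measure (Rd d)) (y0 s : Rd d) : Rd d :=
  corner d n y0 s +
    psiMap (condM (shiftM (corner d n y0 s) ξm) (boxN d n)) φ ψ r (s - corner d n y0 s)

open Filter Topology



lemma map_fract_add (r : ℝ) (hr : r ∈ Set.Ico (0:ℝ) 1) :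
    Measure.map (fun v => Int.fract (v + r)) (volume.restrict (Set.Ico (0:ℝ) 1))
      = volume.restrict (Set.Ico (0:ℝ) 1) := by
  have h1 : Measure.map (fun v : ℝ => v + r) (volume.restrict (Set.Ico (0:ℝ) 1))
      = volume.restrict (Set.Ico r (1+r)) := by
    have := (measurePreserving_add_right (volume : Measure ℝ) r).restrict_preimage
      (s := Set.Ico r (1+r)) measurableSet_Ico
    have hpre : (fun v : ℝ => v + r) ⁻¹' Set.Ico r (1+r) = Set.Ico (0:ℝ) 1 := by
      ext x; simp only [Set.mem_preimage, Set.mem_Ico]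
      constructor <;> intro h <;> exact ⟨by linarith [h.1, h.2], by linarith [h.1, h.2]⟩
    rw [hpre] at this
    exact this.map_eq
  have hcomp : (fun v : ℝ => Int.fract (v + r)) = Int.fract ∘ (fun v : ℝ => v + r) := rfl
  rw [hcomp, ← Measure.map_map measurable_fract (measurable_add_const r), h1]
  have hsplit : volume.restrict (Set.Ico r (1+r))
      = volume.restrict (Set.Ico r 1) + volume.restrict (Set.Ico 1 (1+r)) := by
    rw [← Measure.restrict_union Set.Ico_disjoint_Ico_same measurableSet_Ico,
      Set.Ico_union_Ico_eq_Ico hr.2.le (by linarith [hr.1])]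
  rw [hsplit, Measure.map_add _ _ measurable_fract]
  have e1 : Measure.map Int.fract (volume.restrict (Set.Ico r 1))
      = volume.restrict (Set.Ico r 1) := by
    rw [Measure.map_congr (g := id) ?_, Measure.map_id]
    · filter_upwards [ae_restrict_mem measurableSet_Ico] with x hx
      exact Int.fract_eq_self.2 ⟨le_trans hr.1 hx.1, hx.2⟩
  have e2 : Measure.map Int.fract (volume.restrict (Set.Ico 1 (1+r)))
      = volume.restrict (Set.Ico 0 r) := by
    rw [Measure.map_congr (g := fun x => x + (-1)) ?_]
    · have := (measurePreserving_add_right (volume : Measure ℝ) (-1)).restrict_preimage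
        (s := Set.Ico (0:ℝ) r) measurableSet_Ico
      have hpre : (fun v : ℝ => v + (-1)) ⁻¹' Set.Ico (0:ℝ) r = Set.Ico 1 (1+r) := by
        ext x; simp only [Set.mem_preimage, Set.mem_Ico]
        constructor <;> intro h <;> exact ⟨by linarith [h.1, h.2], by linarith [h.1, h.2]⟩
      rw [hpre] at this
      exact this.map_eq
    · filter_upwards [ae_restrict_mem measurableSet_Ico] with x hx
      have hfl : ⌊x⌋ = 1 := by
        rw [Int.floor_eq_iff]
        constructor
        · exact_mod_cast hx.1
        · push_cast; linarith [hx.2, hr.2]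
      rw [Int.fract, hfl]; push_cast; ring
  rw [e1, e2]
  rw [add_comm, ← Measure.restrict_union Set.Ico_disjoint_Ico_same measurableSet_Ico,
    Set.Ico_union_Ico_eq_Ico hr.1 hr.2.le]


lemma rotation_core (ν : Measure ℝ) [IsProbabilityMeasure ν]
    (hconc : ν (Set.Ico (0:ℝ) 1)ᶜ = 0) (hdiff : ∀ t : ℝ, ν {t} = 0)
    (r : ℝ) (hr : r ∈ Set.Ico (0:ℝ) 1)
    (F Finv : ℝ → ℝ) (hF : ∀ x, F x = (ν (Set.Iic x)).toReal)
    (hFinv : ∀ v, Finv v = sInf {x | v ≤ F x}) :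
    Measurable F ∧ Measurable Finv ∧
      Measure.map (fun x => Finv (Int.fract (F x + r))) ν = ν := by
  have hFc : F = ⇑(ProbabilityTheory.cdf ν) :=
    funext fun x => (hF x).trans (ProbabilityTheory.cdf_eq_real ν x).symm
  have hmono : Monotone F := hFc ▸ ProbabilityTheory.monotone_cdf ν
  have hF0 : ∀ x, 0 ≤ F x := fun x => (hF x) ▸ ENNReal.toReal_nonneg
  have hF1 : ∀ x, F x ≤ 1 := fun x => hFc ▸ ProbabilityTheory.cdf_le_one ν x
  have hIco1 : ν (Set.Ico (0:ℝ) 1) = 1 := by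
    have h1 : (1:ℝ≥0∞) ≤ ν (Set.Ico (0:ℝ) 1) := by
      have := measure_union_le (μ := ν) (Set.Ico (0:ℝ) 1) (Set.Ico (0:ℝ) 1)ᶜ
      rw [Set.union_compl_self, measure_univ, hconc, add_zero] at this
      exact this
    exact le_antisymm prob_le_one h1
  have hFneg : ∀ x : ℝ, x < 0 → F x = 0 := by
    intro x hx
    have : ν (Set.Iic x) = 0 := by
      refine measure_mono_null ?_ hconc
      intro y hy
      simp only [Set.mem_compl_iff, Set.mem_Ico, not_and, not_lt] at *
      intro h0; linarith [Set.mem_Iic.1 hy]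
    rw [hF, this, ENNReal.toReal_zero]
  have hFone : ∀ x : ℝ, 1 ≤ x → F x = 1 := by
    intro x hx
    have h1 : ν (Set.Iic x) = 1 := by
      refine le_antisymm prob_le_one ?_
      rw [← hIco1]
      exact measure_mono (fun y hy => le_trans (le_of_lt hy.2) hx)
    rw [hF, h1, ENNReal.toReal_one]
  -- continuity
  have hcont : Continuous F := by
    rw [hFc, continuous_iff_continuousAt]
    intro x
    have hm := ProbabilityTheory.monotone_cdf ν
    rw [hm.continuousAt_iff_leftLim_eq_rightLim]
    have hright : Function.rightLim (⇑(ProbabilityTheory.cdf ν)) x = ProbabilityTheory.cdf ν x :=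
      (hm.continuousWithinAt_Ioi_iff_rightLim_eq).1
        (((ProbabilityTheory.cdf ν).right_continuous x).mono Set.Ioi_subset_Ici_self)
    have hsing : (ProbabilityTheory.cdf ν).measure {x} = 0 := by
      rw [ProbabilityTheory.measure_cdf]; exact hdiff x
    rw [StieltjesFunction.measure_singleton, ENNReal.ofReal_eq_zero, sub_nonpos] at hsing
    have hle : Function.leftLim (⇑(ProbabilityTheory.cdf ν)) x ≤ ProbabilityTheory.cdf ν x :=
      hm.leftLim_le le_rfl
    rw [hright, le_antisymm hle hsing]
  have hFm : Measurable F := hcont.measurable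
  -- Finv basic properties
  have hone_mem : ∀ v : ℝ, v ≤ 1 → (1:ℝ) ∈ {x | v ≤ F x} := by
    intro v hv; simpa [Set.mem_setOf_eq, hFone 1 le_rfl] using hv
  have hlow : ∀ v : ℝ, 0 < v → ∀ x ∈ {x | v ≤ F x}, (0:ℝ) ≤ x := by
    intro v hv x hx
    by_contra h
    push_neg at h
    rw [Set.mem_setOf_eq, hFneg x h] at hx
    linarith
  have hFinv0 : ∀ v : ℝ, v ≤ 0 → Finv v = 0 := by
    intro v hv
    rw [hFinv]
    have : {x | v ≤ F x} = Set.univ := Set.eq_univ_of_forall fun x => le_trans hv (hF0 x)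
    rw [this]
    exact Real.sInf_of_not_bddBelow not_bddBelow_univ
  have hFinv_top : ∀ v : ℝ, 1 < v → Finv v = 0 := by
    intro v hv
    rw [hFinv]
    have : {x | v ≤ F x} = ∅ := by
      ext x; simp only [Set.mem_setOf_eq, Set.mem_empty_iff_false, iff_false, not_le]
      exact lt_of_le_of_lt (hF1 x) hv
    rw [this]; exact Real.sInf_empty
  have hmono_le : ∀ v v' : ℝ, v ≤ v' → v' ≤ 1 → Finv v ≤ Finv v' := by
    intro v v' hvv hv1
    rcases le_or_gt v' 0 with h0 | h0
    · rw [hFinv0 v (hvv.trans h0), hFinv0 v' h0]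
    rcases le_or_gt v 0 with h1 | h1
    · rw [hFinv0 v h1, hFinv]
      exact le_csInf ⟨1, hone_mem v' hv1⟩ (hlow v' h0)
    · rw [hFinv, hFinv]
      exact csInf_le_csInf ⟨0, hlow v h1⟩ ⟨1, hone_mem v' hv1⟩
        (fun x hx => le_trans hvv hx)
  have hFinvM : Measurable Finv := by
    have hG : Monotone (fun v => Finv (min v 1)) := by
      intro v v' h
      exact hmono_le _ _ (min_le_min h le_rfl) (min_le_right _ _)
    have : Finv = fun v => if v ≤ 1 then Finv (min v 1) else 0 := by
      funext v
      split_ifs with h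
      · rw [min_eq_left h]
      · push_neg at h; exact hFinv_top v h
    rw [this]
    exact Measurable.ite measurableSet_Iic hG.measurable measurable_const
  refine ⟨hFm, hFinvM, ?_⟩
  -- Step A
  have hA : Measure.map F ν = volume.restrict (Set.Ico (0:ℝ) 1) := by
    have : IsProbabilityMeasure (Measure.map F ν) :=
      Measure.isProbabilityMeasure_map hFm.aemeasurable
    refine Measure.ext_of_Iic _ _ (fun y => ?_)
    rw [Measure.map_apply hFm measurableSet_Iic,
      Measure.restrict_apply' measurableSet_Ico]
    rcases lt_or_ge y 0 with hy | hy
    · have h1 : F ⁻¹' Set.Iic y = ∅ := by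
        ext x; simp only [Set.mem_preimage, Set.mem_Iic, Set.mem_empty_iff_false, iff_false,
          not_le]
        exact lt_of_lt_of_le hy (hF0 x)
      have h2 : Set.Iic y ∩ Set.Ico (0:ℝ) 1 = ∅ := by
        rw [Set.eq_empty_iff_forall_notMem]
        rintro x ⟨hx1, hx2, _⟩
        simp only [Set.mem_Iic] at hx1
        linarith
      rw [h1, h2, measure_empty, measure_empty]
    rcases le_or_gt 1 y with hy1 | hy1
    · have h1 : F ⁻¹' Set.Iic y = Set.univ :=
        Set.eq_univ_of_forall fun x => le_trans (hF1 x) hy1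
      have h2 : Set.Iic y ∩ Set.Ico (0:ℝ) 1 = Set.Ico (0:ℝ) 1 := by
        refine Set.inter_eq_self_of_subset_right fun x hx => le_trans (le_of_lt hx.2) hy1
      rw [h1, h2, measure_univ, Real.volume_Ico, sub_zero, ENNReal.ofReal_one]
    -- y ∈ [0,1)
    · have hclosed : IsClosed (F ⁻¹' Set.Iic y) := isClosed_Iic.preimage hcont
      have hne : (F ⁻¹' Set.Iic y).Nonempty := ⟨-1, by
        simp only [Set.mem_preimage, Set.mem_Iic, hFneg (-1) (by norm_num)]; exact hy⟩
      have hbdd : BddAbove (F ⁻¹' Set.Iic y) := by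
        refine ⟨1, fun x hx => ?_⟩
        by_contra h
        push_neg at h
        have := hFone x h.le
        simp only [Set.mem_preimage, Set.mem_Iic, this] at hx
        linarith
      set b := sSup (F ⁻¹' Set.Iic y) with hb
      have hbmem : b ∈ F ⁻¹' Set.Iic y := hclosed.csSup_mem hne hbdd
      have hFb : F b = y := by
        refine le_antisymm hbmem ?_
        by_contra h
        push_neg at h
        have hopen : F ⁻¹' Set.Iio y ∈ 𝓝 b :=
          (isOpen_Iio.preimage hcont).mem_nhds h
        have : (Set.Ioi b ∩ F ⁻¹' Set.Iio y).Nonempty := by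
          refine Filter.nonempty_of_mem (Filter.inter_mem self_mem_nhdsWithin
            (mem_nhdsWithin_of_mem_nhds hopen))
        obtain ⟨x, hxb, hxF⟩ := this
        have : x ≤ b := le_csSup hbdd (show F x ≤ y from le_of_lt hxF)
        exact absurd this (not_le.2 hxb)
      have hset : F ⁻¹' Set.Iic y = Set.Iic b := by
        ext x
        simp only [Set.mem_preimage, Set.mem_Iic]
        constructor
        · intro h; exact le_csSup hbdd h
        · intro h; calc F x ≤ F b := hmono h
            _ = y := hFb
      have h2 : Set.Iic y ∩ Set.Ico (0:ℝ) 1 = Set.Icc 0 y := by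
        ext x
        simp only [Set.mem_inter_iff, Set.mem_Iic, Set.mem_Ico, Set.mem_Icc]
        constructor
        · rintro ⟨h1, h2, _⟩; exact ⟨h2, h1⟩
        · rintro ⟨h1, h2⟩; exact ⟨h2, h1, lt_of_le_of_lt h2 hy1⟩
      rw [hset, h2, Real.volume_Icc, sub_zero]
      rw [← hFb, hF b, ENNReal.ofReal_toReal (measure_ne_top ν _)]
  -- Step C
  have hlamprob : IsProbabilityMeasure (volume.restrict (Set.Ico (0:ℝ) 1)) := by
    constructor
    rw [Measure.restrict_apply_univ, Real.volume_Ico, sub_zero, ENNReal.ofReal_one]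
  have hC : Measure.map Finv (volume.restrict (Set.Ico (0:ℝ) 1)) = ν := by
    have : IsProbabilityMeasure (Measure.map Finv (volume.restrict (Set.Ico (0:ℝ) 1))) :=
      Measure.isProbabilityMeasure_map hFinvM.aemeasurable
    refine Measure.ext_of_Iic _ _ (fun x => ?_)
    rw [Measure.map_apply hFinvM measurableSet_Iic,
      Measure.restrict_apply' measurableSet_Ico]
    have hae : (Finv ⁻¹' Set.Iic x ∩ Set.Ico (0:ℝ) 1 : Set ℝ)
        =ᵐ[volume] (Finv ⁻¹' Set.Iic x ∩ Set.Ioo (0:ℝ) 1 : Set ℝ) :=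
      (Filter.EventuallyEq.refl _ _).inter Ioo_ae_eq_Ico.symm
    rw [measure_congr hae]
    have hkey : Finv ⁻¹' Set.Iic x ∩ Set.Ioo (0:ℝ) 1 = Set.Iic (F x) ∩ Set.Ioo (0:ℝ) 1 := by
      ext v
      simp only [Set.mem_inter_iff, Set.mem_preimage, Set.mem_Iic, Set.mem_Ioo,
        and_congr_left_iff]
      rintro ⟨hv0, hv1⟩
      constructor
      · intro h
        have hclosed : IsClosed {x' : ℝ | v ≤ F x'} := by
          have : {x' : ℝ | v ≤ F x'} = F ⁻¹' Set.Ici v := rfl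
          rw [this]; exact isClosed_Ici.preimage hcont
        have hmem : Finv v ∈ {x' : ℝ | v ≤ F x'} := by
          rw [hFinv]
          exact hclosed.csInf_mem ⟨1, hone_mem v hv1.le⟩ ⟨0, hlow v hv0⟩
        exact le_trans hmem (hmono h)
      · intro h
        rw [hFinv]
        exact csInf_le ⟨0, hlow v hv0⟩ h
    rw [hkey]
    have hFx0 := hF0 x
    have hFx1 := hF1 x
    rcases lt_or_eq_of_le hFx1 with h1 | h1
    · have : Set.Iic (F x) ∩ Set.Ioo (0:ℝ) 1 = Set.Ioc 0 (F x) := by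
        ext v
        simp only [Set.mem_inter_iff, Set.mem_Iic, Set.mem_Ioo, Set.mem_Ioc]
        constructor
        · rintro ⟨ha, hb, _⟩; exact ⟨hb, ha⟩
        · rintro ⟨ha, hb⟩; exact ⟨hb, ha, lt_of_le_of_lt hb h1⟩
      rw [this, Real.volume_Ioc, sub_zero, hF, ENNReal.ofReal_toReal (measure_ne_top ν _)]
    · have hx1 : ν (Set.Iic x) = 1 := by
        rw [hF x] at h1
        exact (ENNReal.toReal_eq_one_iff _).1 h1
      have hss : Set.Iic (F x) ∩ Set.Ioo (0:ℝ) 1 = Set.Ioo (0:ℝ) 1 :=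
        Set.inter_eq_self_of_subset_right fun v hv => le_trans (le_of_lt hv.2) h1.ge
      rw [hss, Real.volume_Ioo, sub_zero, ENNReal.ofReal_one, hx1]
  -- composition
  have hh2 : Measurable (fun v : ℝ => Int.fract (v + r)) :=
    measurable_fract.comp (measurable_add_const r)
  calc Measure.map (fun x => Finv (Int.fract (F x + r))) ν
      = Measure.map Finv (Measure.map (fun v => Int.fract (v + r)) (Measure.map F ν)) := by
        rw [Measure.map_map hh2 hFm, Measure.map_map hFinvM (hh2.comp hFm)]
        rfl
    _ = ν := by rw [hA, map_fract_add r hr, hC]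

lemma measurableSet_boxN {d n : ℕ} : MeasurableSet (boxN d n) := by
  have : boxN d n = ⋂ k, (fun x : Rd d => x k) ⁻¹' Set.Ico (0:ℝ) (n:ℝ) := by
    ext x; simp [boxN, Set.mem_iInter, Set.mem_Ico]
  rw [this]
  exact MeasurableSet.iInter fun k => (measurable_pi_apply k) measurableSet_Ico

lemma psi_preserves {d n : ℕ} (φ : Rd d → ℝ) (ψ : ℝ → Rd d)
    (hφ : Measurable φ) (hψ : Measurable ψ)
    (hmaps : Set.MapsTo φ (boxN d n) (Set.Ico (0:ℝ) 1))
    (hinj : Set.InjOn φ (boxN d n))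
    (hinvl : ∀ x ∈ boxN d n, ψ (φ x) = x)
    (r : ℝ) (hr : r ∈ Set.Ico (0:ℝ) 1)
    (μ : Measure (Rd d)) [IsProbabilityMeasure μ]
    (hconc : μ (boxN d n)ᶜ = 0) (hdiff : ∀ t, μ {t} = 0) :
    Measurable (psiMap μ φ ψ r) ∧
    ∀ B : Set (Rd d), MeasurableSet B → μ (psiMap μ φ ψ r ⁻¹' B) = μ B := by
  set ν : Measure ℝ := Measure.map φ μ with hν
  have : IsProbabilityMeasure ν := Measure.isProbabilityMeasure_map hφ.aemeasurable
  have hconcν : ν (Set.Ico (0:ℝ) 1)ᶜ = 0 := by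
    rw [hν, Measure.map_apply hφ measurableSet_Ico.compl]
    refine measure_mono_null ?_ hconc
    intro x hx
    simp only [Set.mem_preimage, Set.mem_compl_iff] at *
    exact fun hb => hx (hmaps hb)
  have hdiffν : ∀ t : ℝ, ν {t} = 0 := by
    intro t
    rw [hν, Measure.map_apply hφ (measurableSet_singleton t)]
    have hsub : φ ⁻¹' {t} ⊆ (φ ⁻¹' {t} ∩ boxN d n) ∪ (boxN d n)ᶜ := by
      intro x hx
      by_cases h : x ∈ boxN d n
      · exact Or.inl ⟨hx, h⟩
      · exact Or.inr h
    refine measure_mono_null hsub ?_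
    refine le_antisymm (le_trans (measure_union_le _ _) ?_) (zero_le)
    rw [hconc, add_zero]
    rcases Set.eq_empty_or_nonempty (φ ⁻¹' {t} ∩ boxN d n) with he | ⟨x₀, hx₀⟩
    · rw [he, measure_empty]
    · have hsub2 : φ ⁻¹' {t} ∩ boxN d n ⊆ {x₀} := by
        rintro x ⟨hx1, hx2⟩
        have : φ x = φ x₀ := by
          rw [Set.mem_preimage, Set.mem_singleton_iff] at hx1
          rw [Set.mem_inter_iff, Set.mem_preimage, Set.mem_singleton_iff] at hx₀
          rw [hx1, hx₀.1]
        exact hinj hx2 hx₀.2 this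
      exact le_trans (measure_mono hsub2) (le_of_eq (hdiff x₀))
  have hF : ∀ x, cdf μ φ x = (ν (Set.Iic x)).toReal := by
    intro x
    rw [cdf, hν, Measure.map_apply hφ measurableSet_Iic]
  obtain ⟨hFm, hFinvM, hmap⟩ :=
    rotation_core ν hconcν hdiffν r hr (cdf μ φ) (cdfInv μ φ) hF (fun v => rfl)
  set H : ℝ → ℝ := fun x => cdfInv μ φ (Int.fract (cdf μ φ x + r)) with hH
  have hHm : Measurable H := hFinvM.comp (measurable_fract.comp (hFm.add_const r))
  have hΨm : Measurable (psiMap μ φ ψ r) := hψ.comp (hHm.comp hφ)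
  refine ⟨hΨm, fun B hB => ?_⟩
  have hmeq : ∀ S : Set (Rd d), MeasurableSet S → μ (S ∩ boxN d n) = μ S := by
    intro S _
    exact measure_inter_conull' (measure_mono_null (Set.diff_subset_compl _ _) hconc)
  calc μ (psiMap μ φ ψ r ⁻¹' B) = μ (φ ⁻¹' (H ⁻¹' (ψ ⁻¹' B))) := rfl
    _ = ν (H ⁻¹' (ψ ⁻¹' B)) := (Measure.map_apply hφ (hHm (hψ hB))).symm
    _ = (Measure.map H ν) (ψ ⁻¹' B) := (Measure.map_apply hHm (hψ hB)).symm
    _ = ν (ψ ⁻¹' B) := by rw [hmap]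
    _ = μ (φ ⁻¹' (ψ ⁻¹' B)) := Measure.map_apply hφ (hψ hB)
    _ = μ (φ ⁻¹' (ψ ⁻¹' B) ∩ boxN d n) := (hmeq _ (hφ (hψ hB))).symm
    _ = μ (B ∩ boxN d n) := by
        congr 1
        ext x
        simp only [Set.mem_inter_iff, Set.mem_preimage, and_congr_left_iff]
        intro hx
        rw [hinvl x hx]
    _ = μ B := hmeq _ hB


lemma floor_div_eq_iff' {x c : ℝ} (hc : 0 < c) {z : ℤ} :
    ⌊x / c⌋ = z ↔ c * z ≤ x ∧ x < c * (z + 1) := by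
  rw [Int.floor_eq_iff, le_div_iff₀ hc, div_lt_iff₀ hc, mul_comm, mul_comm ((z:ℝ)+1) c]


/-- **Example 1, main claim.** For a diffuse random measure `ξ°` and the background
`Y°` built from a uniform shift `Y°_0` of the lattice `nℤ^d`, the map
`π_r(Y°,ξ°) = ψ_r^μ(Y°_0) - Y°_0` with `μ = θ_{-Y°_0}ξ°(· | [0,n)^d)` is a preserving
shift: for each fixed value of `(Y°,ξ°)` the induced allocation rule `τ_r` preserves
`ξ°`. -/
theorem example_allocation_preserves
    {d n : ℕ} (hn : 0 < n) (φ : Rd d → ℝ) (ψ : ℝ → Rd d)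
    (hφ : Measurable φ) (hψ : Measurable ψ)
    (hbij : Set.BijOn φ (boxN d n) (Set.Ico (0 : ℝ) 1))
    (hinv : Set.InvOn ψ φ (boxN d n) (Set.Ico (0 : ℝ) 1))
    (r : ℝ) (hr : r ∈ Set.Ico (0 : ℝ) 1)
    (ξm : Measure (Rd d)) [IsLocallyFiniteMeasure ξm]
    (hdiffuse : ∀ t, ξm {t} = 0)
    (y0 : Rd d) (hy0 : y0 ∈ boxN d n) :
    ∀ B : Set (Rd d), MeasurableSet B →
      ξm ((fun s => tauEx d n φ ψ r ξm y0 s) ⁻¹' B) = ξm B := by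
  intro B hB
  have hnR : (0:ℝ) < n := by exact_mod_cast hn
  set a : ZZd d → Rd d := fun i k => (n:ℝ) * (i k) - y0 k with ha
  set boxAt : ZZd d → Set (Rd d) := fun i => (fun s => s - a i) ⁻¹' boxN d n with hbox
  have hsub : ∀ i, Measurable fun s : Rd d => s - a i :=
    fun i => measurable_id.sub measurable_const
  have hboxm : ∀ i, MeasurableSet (boxAt i) := fun i => (hsub i) measurableSet_boxN
  have hfloor : ∀ (i : ZZd d) (s : Rd d),
      s ∈ boxAt i ↔ ∀ k, ⌊(s k + y0 k) / (n:ℝ)⌋ = i k := by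
    intro i s
    constructor
    · intro hs k
      have h := hs k
      simp only [Pi.sub_apply, ha] at h
      rw [floor_div_eq_iff' hnR]
      constructor
      · push_cast; linarith [h.1]
      · push_cast; linarith [h.2]
    · intro h k
      have := (floor_div_eq_iff' hnR).1 (h k)
      simp only [Pi.sub_apply, ha]
      constructor
      · push_cast at this ⊢; linarith [this.1]
      · push_cast at this ⊢; linarith [this.2]
  have hdisj : Pairwise (Function.onFun Disjoint boxAt) := by
    intro i j hij
    rw [Function.onFun, Set.disjoint_left]
    intro s hsi hsj
    apply hij
    funext k
    rw [← (hfloor i s).1 hsi k, ← (hfloor j s).1 hsj k]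
  have hunion : (⋃ i, boxAt i) = Set.univ := by
    rw [Set.eq_univ_iff_forall]
    intro s
    exact Set.mem_iUnion.2 ⟨fun k => ⌊(s k + y0 k) / (n:ℝ)⌋, (hfloor _ s).2 fun k => rfl⟩
  have hcorner : ∀ (i : ZZd d), ∀ s ∈ boxAt i, corner d n y0 s = a i := by
    intro i s hs
    funext k
    rw [corner, (hfloor i s).1 hs k]
  set ξa : ZZd d → Measure (Rd d) := fun i => shiftM (a i) ξm with hξadef
  have hξa : ∀ (i : ZZd d) (E : Set (Rd d)), MeasurableSet E →
      ξa i E = ξm ((fun s => s - a i) ⁻¹' E) :=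
    fun i E hE => Measure.map_apply (hsub i) hE
  have hcbox : ∀ i, ξa i (boxN d n) = ξm (boxAt i) :=
    fun i => hξa i _ measurableSet_boxN
  have hfin : ∀ i, ξm (boxAt i) ≠ ⊤ := by
    intro i
    have hsubc : boxAt i ⊆ Set.Icc (a i) (fun k => a i k + n) := by
      intro s hs
      have := hs
      constructor
      · intro k; have := hs k; simp only [Pi.sub_apply] at this; linarith [this.1]
      · intro k
        have := hs k
        simp only [Pi.sub_apply] at this
        show s k ≤ a i k + n
        linarith [this.2]
    exact ne_top_of_le_ne_top (isCompact_Icc.measure_lt_top).ne (measure_mono hsubc)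
  set Ψ : ZZd d → Rd d → Rd d :=
    fun i => psiMap (condM (ξa i) (boxN d n)) φ ψ r with hΨdef
  have hτ : ∀ (i : ZZd d), ∀ s ∈ boxAt i,
      tauEx d n φ ψ r ξm y0 s = a i + Ψ i (s - a i) := by
    intro i s hs
    rw [tauEx, hcorner i s hs]
  -- μ_i facts
  have hμapp : ∀ (i : ZZd d) (E : Set (Rd d)), MeasurableSet E →
      condM (ξa i) (boxN d n) E = (ξm (boxAt i))⁻¹ * ξa i (E ∩ boxN d n) := by
    intro i E hE
    rw [condM, Measure.smul_apply, Measure.restrict_apply hE, smul_eq_mul, hcbox]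
  have hdiffa : ∀ (i : ZZd d) (t : Rd d), ξa i {t} = 0 := by
    intro i t
    rw [hξa i _ (measurableSet_singleton t)]
    have : (fun s : Rd d => s - a i) ⁻¹' {t} = {t + a i} := by
      ext x
      simp only [Set.mem_preimage, Set.mem_singleton_iff, sub_eq_iff_eq_add]
    rw [this]
    exact hdiffuse _
  -- measurability of Ψ i and the per-box key identity
  have hkey : ∀ i : ZZd d, Measurable (Ψ i) ∧
      ξm ((fun s => s - a i) ⁻¹' ((Ψ i) ⁻¹' ((fun x => a i + x) ⁻¹' B) ∩ boxN d n))
        = ξm ((fun s => s - a i) ⁻¹' (((fun x => a i + x) ⁻¹' B) ∩ boxN d n)) := by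
    intro i
    set c := ξm (boxAt i) with hc
    set μi := condM (ξa i) (boxN d n) with hμi
    rcases eq_or_ne c 0 with hc0 | hc0
    · -- degenerate box
      have hz : μi = 0 := by
        rw [hμi, condM, Measure.restrict_eq_zero.2 (by rw [hcbox]; exact hc0), smul_zero]
      have hconst : Ψ i = fun _ => ψ (cdfInv μi φ (Int.fract (0 + r))) := by
        funext s
        have hcdf0 : cdf μi φ (φ s) = 0 := by rw [hz, cdf]; simp
        simp only [hΨdef, psiMap, ← hμi, hcdf0]
      constructor
      · rw [hconst]; exact measurable_const
      · have h1 : ξm ((fun s => s - a i) ⁻¹' ((Ψ i) ⁻¹' ((fun x => a i + x) ⁻¹' B) ∩ boxN d n)) ≤ c := by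
          rw [hc, ← hcbox, hξa i _ measurableSet_boxN]
          exact measure_mono (Set.preimage_mono Set.inter_subset_right)
        have h2 : ξm ((fun s => s - a i) ⁻¹' (((fun x => a i + x) ⁻¹' B) ∩ boxN d n)) ≤ c := by
          rw [hc, ← hcbox, hξa i _ measurableSet_boxN]
          exact measure_mono (Set.preimage_mono Set.inter_subset_right)
        rw [le_antisymm (h1.trans hc0.le) (zero_le),
          le_antisymm (h2.trans hc0.le) (zero_le)]
    · -- probability box
      have hcne : c ≠ ⊤ := hc ▸ hfin i
      have hprob : IsProbabilityMeasure μi := by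
        constructor
        rw [hμi, hμapp i _ MeasurableSet.univ, Set.univ_inter, hcbox, ← hc]
        exact ENNReal.inv_mul_cancel hc0 hcne
      have hconcμ : μi (boxN d n)ᶜ = 0 := by
        rw [hμi, hμapp i _ measurableSet_boxN.compl, Set.compl_inter_self, measure_empty,
          mul_zero]
      have hdiffμ : ∀ t, μi {t} = 0 := by
        intro t
        rw [hμi, hμapp i _ (measurableSet_singleton t)]
        have : ξa i ({t} ∩ boxN d n) = 0 :=
          measure_mono_null Set.inter_subset_left (hdiffa i t)
        rw [this, mul_zero]
      obtain ⟨hΨm, hpres⟩ := psi_preserves φ ψ hφ hψ hbij.mapsTo hbij.injOn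
        (fun x hx => hinv.1 hx) r hr μi hconcμ hdiffμ
      refine ⟨hΨm, ?_⟩
      set B' : Set (Rd d) := (fun x => a i + x) ⁻¹' B with hB'
      have hB'm : MeasurableSet B' := (measurable_const.add measurable_id) hB
      have relim : ∀ (E : Set (Rd d)), MeasurableSet E →
          ξm ((fun s => s - a i) ⁻¹' (E ∩ boxN d n)) = c * μi E := by
        intro E hE
        rw [hμi, hμapp i E hE, ← mul_assoc, ENNReal.mul_inv_cancel hc0 hcne, one_mul,
          hξa i _ (hE.inter measurableSet_boxN)]
      rw [relim _ (hΨm hB'm), relim _ hB'm, hpres B' hB'm]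
  -- summing over boxes
  have hsplit : ∀ (A : Set (Rd d)), (∀ i, MeasurableSet (A ∩ boxAt i)) →
      ξm A = ∑' i : ZZd d, ξm (A ∩ boxAt i) := by
    intro A hA
    calc ξm A = ξm (⋃ i, A ∩ boxAt i) := by
          rw [← Set.inter_iUnion, hunion, Set.inter_univ]
      _ = ∑' i : ZZd d, ξm (A ∩ boxAt i) :=
          measure_iUnion (fun i j hij => ((hdisj hij).mono Set.inter_subset_right
            Set.inter_subset_right)) hA
  -- identify the pieces
  have hpiece1 : ∀ i : ZZd d,
      (fun s => tauEx d n φ ψ r ξm y0 s) ⁻¹' B ∩ boxAt i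
        = (fun s => s - a i) ⁻¹' ((Ψ i) ⁻¹' ((fun x => a i + x) ⁻¹' B) ∩ boxN d n) := by
    intro i
    ext s
    simp only [Set.mem_inter_iff, Set.mem_preimage]
    constructor
    · rintro ⟨hτB, hbox⟩
      refine ⟨?_, hbox⟩
      rwa [← hτ i s hbox]
    · rintro ⟨hΨB, hbox⟩
      exact ⟨by rwa [hτ i s hbox], hbox⟩
  have hpiece2 : ∀ i : ZZd d,
      B ∩ boxAt i = (fun s => s - a i) ⁻¹' (((fun x => a i + x) ⁻¹' B) ∩ boxN d n) := by
    intro i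
    ext s
    simp only [Set.mem_inter_iff, Set.mem_preimage, add_sub_cancel]
    tauto
  have hm1 : ∀ i : ZZd d, MeasurableSet ((fun s => tauEx d n φ ψ r ξm y0 s) ⁻¹' B ∩ boxAt i) := by
    intro i
    rw [hpiece1 i]
    exact (hsub i) ((((hkey i).1) ((measurable_const.add measurable_id) hB)).inter
      measurableSet_boxN)
  have hm2 : ∀ i : ZZd d, MeasurableSet (B ∩ boxAt i) :=
    fun i => hB.inter (hboxm i)
  rw [hsplit _ hm1, hsplit B hm2]
  congr 1
  funext i
  rw [hpiece1 i, hpiece2 i]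
  exact (hkey i).2


end LT
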